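/- Let R be a commutative coherent ring and let G be a finite group. Then the group ring R[G] is left and right coherent. -/

import Mathlib

/-! Preamble: basic notions of relative homological algebra over a
(possibly noncommutative) ring.  Right `R`-modules are modeled as
(left) modules over the opposite ring `Rᵐᵒᵖ`. -/

open CategoryTheory Opposite

noncomputable section

/-- The Ext group `Ext^n(A, B)` in the category of left `S`-modules,
computed as a derived functor (of `ℤ`-modules). -/
def extGroup (S : Type) [Ring S] (n : ℕ) (A B : ModuleCat.{0} S) : Type :=
  ((_root_.Ext ℤ (ModuleCat.{0} S) n).obj (op A)).obj B

/-- Vanishing of the Ext group `Ext^n(A, B)`. -/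
def extVanish (S : Type) [Ring S] (n : ℕ) (A B : ModuleCat.{0} S) : Prop :=
  Subsingleton (extGroup S n A B)

/-- A module `E` is FP-injective if `Ext¹(F, E) = 0` for every finitely
presented module `F`. -/
def FPInjective (S : Type) [Ring S] (E : ModuleCat.{0} S) : Prop :=
  ∀ F : ModuleCat.{0} S, Module.FinitePresentation S F → extVanish S 1 F E

/-- `E` satisfies the Ext-criterion for FP-injective dimension `≤ n`:
`Ext^{n+1}(F, E) = 0` for every finitely presented `F`. -/
def fpInjDimLE (S : Type) [Ring S] (E : ModuleCat.{0} S) (n : ℕ) : Prop :=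
  ∀ F : ModuleCat.{0} S, Module.FinitePresentation S F → extVanish S (n + 1) F E

/-- `E` has FP-injective dimension exactly `n` : `n` is the least natural number
with `Ext^{n+1}(F, E) = 0` for all finitely presented `F`. -/
def fpInjDimEq (S : Type) [Ring S] (E : ModuleCat.{0} S) (n : ℕ) : Prop :=
  fpInjDimLE S E n ∧ ∀ m : ℕ, fpInjDimLE S E m → n ≤ m

/-- `E` has finite FP-injective dimension. -/
def fpInjDimFinite (S : Type) [Ring S] (E : ModuleCat.{0} S) : Prop :=
  ∃ n : ℕ, fpInjDimLE S E n

/-- A ring `S` is left coherent if every finitely generated left ideal is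
finitely presented (as a left `S`-module). -/
def LeftCoherent (S : Type) [Ring S] : Prop :=
  ∀ I : Submodule S S, I.FG → Module.FinitePresentation S I

/-- A ring `S` is right coherent if its opposite ring is left coherent. -/
def RightCoherent (S : Type) [Ring S] : Prop :=
  LeftCoherent Sᵐᵒᵖ

section BTensor

variable (R : Type) [Ring R]

/-- The subgroup of `A ⊗_ℤ B` by which one quotients to obtain the balanced
tensor product `A ⊗_R B` of a right `R`-module `A` and a left `R`-module `B`. -/
def btRel (A : Type) [AddCommGroup A] [Module Rᵐᵒᵖ A]
    (B : Type) [AddCommGroup B] [Module R B] :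
    Submodule ℤ (TensorProduct ℤ A B) :=
  Submodule.span ℤ
    {x | ∃ (a : A) (r : R) (b : B),
      x = (MulOpposite.op r • a) ⊗ₜ[ℤ] b - a ⊗ₜ[ℤ] (r • b)}

/-- The balanced tensor product `A ⊗_R B` of a right `R`-module `A` and a left
`R`-module `B`, defined as a quotient of `A ⊗_ℤ B`. -/
abbrev BTensor (A : Type) [AddCommGroup A] [Module Rᵐᵒᵖ A]
    (B : Type) [AddCommGroup B] [Module R B] : Type :=
  TensorProduct ℤ A B ⧸ btRel R A B

variable {A A' : Type} [AddCommGroup A] [Module Rᵐᵒᵖ A] [AddCommGroup A'] [Module Rᵐᵒᵖ A']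
variable {B B' : Type} [AddCommGroup B] [Module R B] [AddCommGroup B'] [Module R B']

/-- The map `A ⊗_R B → A ⊗_R B'` induced by a map `f : B → B'` of left
`R`-modules. -/
def BTensor.lmap (f : B →ₗ[R] B') (A : Type) [AddCommGroup A] [Module Rᵐᵒᵖ A] :
    BTensor R A B →ₗ[ℤ] BTensor R A B' :=
  Submodule.mapQ (btRel R A B) (btRel R A B')
    (TensorProduct.map LinearMap.id f.toAddMonoidHom.toIntLinearMap)
    (by
      rw [btRel, Submodule.span_le]
      rintro x ⟨a, r, b, rfl⟩
      simp only [SetLike.mem_coe, Submodule.mem_comap, map_sub, TensorProduct.map_tmul,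
        LinearMap.id_apply, AddMonoidHom.coe_toIntLinearMap, LinearMap.toAddMonoidHom_coe,
        map_smul]
      exact Submodule.subset_span ⟨a, r, f b, (by change (TensorProduct.map LinearMap.id f.toAddMonoidHom.toIntLinearMap : TensorProduct ℤ A B →ₗ[ℤ] TensorProduct ℤ A B') _ = _; simp)⟩)

/-- The map `A ⊗_R B → A' ⊗_R B` induced by a map `g : A → A'` of right
`R`-modules. -/
def BTensor.rmap (g : A →ₗ[Rᵐᵒᵖ] A') (B : Type) [AddCommGroup B] [Module R B] :
    BTensor R A B →ₗ[ℤ] BTensor R A' B :=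
  Submodule.mapQ (btRel R A B) (btRel R A' B)
    (TensorProduct.map g.toAddMonoidHom.toIntLinearMap LinearMap.id)
    (by
      rw [btRel, Submodule.span_le]
      rintro x ⟨a, r, b, rfl⟩
      simp only [SetLike.mem_coe, Submodule.mem_comap, map_sub, TensorProduct.map_tmul,
        LinearMap.id_apply, AddMonoidHom.coe_toIntLinearMap, LinearMap.toAddMonoidHom_coe,
        map_smul]
      exact Submodule.subset_span ⟨g a, r, b, (by change (TensorProduct.map g.toAddMonoidHom.toIntLinearMap LinearMap.id : TensorProduct ℤ A B →ₗ[ℤ] TensorProduct ℤ A' B) _ = _; simp)⟩)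

/-- A right `R`-module `A` is flat if the functor `A ⊗_R —` preserves
injectivity of maps of left `R`-modules. -/
def FlatRight (A : ModuleCat.{0} Rᵐᵒᵖ) : Prop :=
  ∀ (B B' : ModuleCat.{0} R) (f : B →ₗ[R] B'),
    Function.Injective f → Function.Injective (BTensor.lmap R f A)

/-- A left `R`-module `B` is flat if the functor `— ⊗_R B` preserves
injectivity of maps of right `R`-modules. -/
def FlatLeft (B : ModuleCat.{0} R) : Prop :=
  ∀ (A A' : ModuleCat.{0} Rᵐᵒᵖ) (g : A →ₗ[Rᵐᵒᵖ] A'),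
    Function.Injective g → Function.Injective (BTensor.rmap R g B)

end BTensor

/-- A module `N` is Ding injective if there is a doubly infinite exact sequence
of injective modules, with `N` as one of the kernels, which stays exact after
applying `Hom(E, —)` for every FP-injective module `E`. -/
def DingInjective (S : Type) [Ring S] (N : ModuleCat.{0} S) : Prop :=
  ∃ (I : ℤ → ModuleCat.{0} S) (d : ∀ n : ℤ, I n →ₗ[S] I (n + 1)),
    (∀ n, Module.Injective S (I n)) ∧
    (∀ n, Function.Exact (d n) (d (n + 1))) ∧
    Nonempty (N ≃ₗ[S] LinearMap.ker (d 0)) ∧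
    (∀ E : ModuleCat.{0} S, FPInjective S E → ∀ n : ℤ,
      Function.Exact (fun g : E →ₗ[S] I n => (d n).comp g)
        (fun g : E →ₗ[S] I (n + 1) => (d (n + 1)).comp g))

/-- A right `R`-module `M` is Ding projective if there is a doubly infinite
exact sequence of projective right modules, with `M` as one of the kernels,
which stays exact after applying `Hom(—, F)` for every flat right module `F`. -/
def DingProjective (R : Type) [Ring R] (M : ModuleCat.{0} Rᵐᵒᵖ) : Prop :=
  ∃ (P : ℤ → ModuleCat.{0} Rᵐᵒᵖ) (d : ∀ n : ℤ, P n →ₗ[Rᵐᵒᵖ] P (n + 1)),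
    (∀ n, Module.Projective Rᵐᵒᵖ (P n)) ∧
    (∀ n, Function.Exact (d n) (d (n + 1))) ∧
    Nonempty (M ≃ₗ[Rᵐᵒᵖ] LinearMap.ker (d 0)) ∧
    (∀ F : ModuleCat.{0} Rᵐᵒᵖ, FlatRight R F → ∀ n : ℤ,
      Function.Exact (fun g : P (n + 1 + 1) →ₗ[Rᵐᵒᵖ] F => g.comp (d (n + 1)))
        (fun g : P (n + 1) →ₗ[Rᵐᵒᵖ] F => g.comp (d n)))

/-- A right `R`-module `M` is Ding flat if there is a doubly infinite exact
sequence of flat right modules, with `M` as one of the kernels, which stays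
exact after applying `— ⊗_R E` for every FP-injective left module `E`. -/
def DingFlat (R : Type) [Ring R] (M : ModuleCat.{0} Rᵐᵒᵖ) : Prop :=
  ∃ (F : ℤ → ModuleCat.{0} Rᵐᵒᵖ) (d : ∀ n : ℤ, F n →ₗ[Rᵐᵒᵖ] F (n + 1)),
    (∀ n, FlatRight R (F n)) ∧
    (∀ n, Function.Exact (d n) (d (n + 1))) ∧
    Nonempty (M ≃ₗ[Rᵐᵒᵖ] LinearMap.ker (d 0)) ∧
    (∀ E : ModuleCat.{0} R, FPInjective R E → ∀ n : ℤ,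
      Function.Exact (BTensor.rmap R (d n) E) (BTensor.rmap R (d (n + 1)) E))

/-- A left `R`-module `M` is Gorenstein flat if there is a doubly infinite
exact sequence of flat left modules, with `M` as one of the kernels, which
stays exact after applying `E ⊗_R —` for every injective right module `E`. -/
def GorensteinFlat (R : Type) [Ring R] (M : ModuleCat.{0} R) : Prop :=
  ∃ (F : ℤ → ModuleCat.{0} R) (d : ∀ n : ℤ, F n →ₗ[R] F (n + 1)),
    (∀ n, FlatLeft R (F n)) ∧
    (∀ n, Function.Exact (d n) (d (n + 1))) ∧
    Nonempty (M ≃ₗ[R] LinearMap.ker (d 0)) ∧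
    (∀ E : ModuleCat.{0} Rᵐᵒᵖ, Module.Injective Rᵐᵒᵖ E → ∀ n : ℤ,
      Function.Exact (BTensor.lmap R (d n) E) (BTensor.lmap R (d (n + 1)) E))

/-- A right `R`-module `M` has flat dimension `≤ n` : there is an exact
resolution `0 → F_n → ⋯ → F_0 → M → 0` by flat right modules (encoded as an
`ℕ`-indexed resolution which vanishes beyond degree `n`). -/
def flatDimLE (R : Type) [Ring R] (M : ModuleCat.{0} Rᵐᵒᵖ) (n : ℕ) : Prop :=
  ∃ (F : ℕ → ModuleCat.{0} Rᵐᵒᵖ) (d : ∀ k : ℕ, F (k + 1) →ₗ[Rᵐᵒᵖ] F k)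
    (ε : F 0 →ₗ[Rᵐᵒᵖ] M),
    (∀ k, FlatRight R (F k)) ∧
    Function.Surjective ε ∧
    Function.Exact (d 0) ε ∧
    (∀ k, Function.Exact (d (k + 1)) (d k)) ∧
    (∀ k, n < k → Subsingleton (F k))

/-- A right `R`-module has finite flat dimension. -/
def flatDimFinite (R : Type) [Ring R] (M : ModuleCat.{0} Rᵐᵒᵖ) : Prop :=
  ∃ n : ℕ, flatDimLE R M n

/-- A ring `R` is an `n`-FC ring if it is left and right coherent and has left
and right self FP-injective dimension equal to `n`. -/
def IsFCRing (R : Type) [Ring R] (n : ℕ) : Prop :=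
  LeftCoherent R ∧ RightCoherent R ∧
    fpInjDimEq R (ModuleCat.of R R) n ∧
    fpInjDimEq Rᵐᵒᵖ (ModuleCat.of Rᵐᵒᵖ Rᵐᵒᵖ) n

/-- A ring is Ding-Chen if it is an `n`-FC ring for some `n`. -/
def IsDingChen (R : Type) [Ring R] : Prop :=
  ∃ n : ℕ, IsFCRing R n

end

section Aux

variable (R : Type) [CommRing R]

/-- Kernels of maps between finite free modules over a coherent ring are f.g. -/
lemma kerFG (hR : LeftCoherent R) :
    ∀ (m n : ℕ) (f : (Fin n → R) →ₗ[R] (Fin m → R)), (LinearMap.ker f).FG := by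
  intro m
  induction m with
  | zero =>
    intro n f
    have hf : f = 0 := by ext x i; exact i.elim0
    rw [hf, LinearMap.ker_zero]
    exact Module.Finite.fg_top
  | succ m ih =>
    intro n f
    set q : (Fin (m+1) → R) →ₗ[R] R := LinearMap.proj (Fin.last m) with hq
    set p : (Fin (m+1) → R) →ₗ[R] (Fin m → R) := LinearMap.funLeft R R Fin.castSucc with hp
    have hIfg : (LinearMap.range (q ∘ₗ f)).FG := by
      rw [LinearMap.range_eq_map]
      exact Submodule.FG.map _ Module.Finite.fg_top
    haveI := hR _ hIfg
    have hK : (LinearMap.ker (q ∘ₗ f)).FG := by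
      have := Module.FinitePresentation.fg_ker (q ∘ₗ f).rangeRestrict
        (LinearMap.surjective_rangeRestrict _)
      rwa [LinearMap.ker_rangeRestrict] at this
    set K := LinearMap.ker (q ∘ₗ f) with hKdef
    haveI : Module.Finite R K := Module.Finite.iff_fg.mpr hK
    obtain ⟨k, π, hπ⟩ := Module.Finite.exists_fin' R K
    have hker := ih k ((p ∘ₗ f) ∘ₗ K.subtype ∘ₗ π)
    have key : LinearMap.ker f
        = Submodule.map (K.subtype ∘ₗ π) (LinearMap.ker ((p ∘ₗ f) ∘ₗ K.subtype ∘ₗ π)) := by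
      ext x
      constructor
      · intro hx
        have hx0 : f x = 0 := hx
        have hxK : x ∈ K := by
          simp [hKdef, LinearMap.mem_ker, hx0]
        obtain ⟨y, hy⟩ := hπ ⟨x, hxK⟩
        refine ⟨y, ?_, by simp [hy]⟩
        simp [LinearMap.mem_ker, hy, hx0]
      · rintro ⟨y, hy, rfl⟩
        have h1 : p (f ((π y : K) : Fin n → R)) = 0 := hy
        have h2 : q (f ((π y : K) : Fin n → R)) = 0 := (π y).2
        show f _ = 0
        funext i
        induction i using Fin.lastCases with
        | last => exact h2
        | cast j => exact congrFun h1 j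
    rw [key]
    exact hker.map _

/-- Over a coherent ring, f.g. submodules of finite free modules are f.p. -/
lemma submoduleFP (hR : LeftCoherent R) (m : ℕ) (N : Submodule R (Fin m → R))
    (hN : N.FG) : Module.FinitePresentation R N := by
  haveI : Module.Finite R N := Module.Finite.iff_fg.mpr hN
  obtain ⟨k, π, hπ⟩ := Module.Finite.exists_fin' R N
  have hker : (LinearMap.ker π).FG := by
    have := kerFG R hR m k (N.subtype ∘ₗ π)
    rwa [LinearMap.ker_comp, Submodule.ker_subtype, Submodule.comap_bot] at this
  exact Module.finitePresentation_of_surjective π hπ hker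

lemma Submodule.fg_of_restrictScalars' {S M : Type*} [Ring S] [Algebra R S]
    [AddCommGroup M] [Module R M] [Module S M] [IsScalarTower R S M]
    (p : Submodule S M) (h : (p.restrictScalars R).FG) : p.FG := by
  obtain ⟨s, hs⟩ := h
  refine ⟨s, le_antisymm (Submodule.span_le.mpr ?_) ?_⟩
  · intro x hx
    have : x ∈ Submodule.span R (s : Set M) := Submodule.subset_span hx
    rw [hs] at this
    exact this
  · intro x hx
    have : x ∈ Submodule.span R (s : Set M) := by rw [hs]; exact hx
    exact Submodule.span_le_restrictScalars R S (s : Set M) this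

/-- Main lemma: a module-finite free algebra over a coherent commutative ring
is left coherent. -/
lemma mainCoherent (hR : LeftCoherent R) (S : Type) [Ring S] [Algebra R S]
    [Module.Finite R S] [Module.Free R S] : LeftCoherent S := by
  classical
  haveI : Fintype (Module.Free.ChooseBasisIndex R S) := Fintype.ofFinite _
  let ι := Module.Free.ChooseBasisIndex R S
  let e : S ≃ₗ[R] (Fin (Fintype.card ι) → R) :=
    ((Module.Free.chooseBasis R S).repr.trans
      (Finsupp.linearEquivFunOnFinite R R ι)).trans
      (LinearEquiv.funCongrLeft R R (Fintype.equivFin ι).symm)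
  have hsub : ∀ (N : Submodule R S), N.FG → Module.FinitePresentation R N := by
    intro N hN
    have hNm : (N.map e.toLinearMap).FG := hN.map _
    haveI := submoduleFP R hR _ _ hNm
    have e2 : N ≃ₗ[R] (N.map e.toLinearMap) :=
      Submodule.equivMapOfInjective e.toLinearMap e.injective N
    exact Module.finitePresentation_of_surjective e2.symm.toLinearMap
      e2.symm.surjective (by rw [LinearEquiv.ker]; exact Submodule.fg_bot)
  intro I hI
  haveI : Module.Finite S I := Module.Finite.iff_fg.mpr hI
  haveI : Module.Finite R I := Module.Finite.trans S I
  haveI hIR : Module.FinitePresentation R I := by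
    set f : I →ₗ[R] S := (I.subtype).restrictScalars R with hf
    have hinj : Function.Injective f := Submodule.injective_subtype I
    have hfg : (LinearMap.range f).FG := by
      rw [LinearMap.range_eq_map]
      exact Submodule.FG.map _ Module.Finite.fg_top
    haveI := hsub _ hfg
    have e2 : I ≃ₗ[R] (LinearMap.range f) := LinearEquiv.ofInjective f hinj
    exact Module.finitePresentation_of_surjective e2.symm.toLinearMap
      e2.symm.surjective (by rw [LinearEquiv.ker]; exact Submodule.fg_bot)
  obtain ⟨k, φ, hφ⟩ := Module.Finite.exists_fin' S I
  have hker : (LinearMap.ker φ).FG := by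
    haveI : Module.FinitePresentation R (Fin k → S) :=
      Module.finitePresentation_of_projective R _
    have h1 : (LinearMap.ker (φ.restrictScalars R)).FG :=
      Module.FinitePresentation.fg_ker (φ.restrictScalars R) hφ
    rw [LinearMap.ker_restrictScalars] at h1
    exact Submodule.fg_of_restrictScalars' R _ h1
  exact Module.finitePresentation_of_surjective φ hφ hker

end Aux


/-- If `R` is a commutative coherent ring and `G` is a finite
group, then the group ring `R[G]` is left and right coherent. -/
theorem statement19 (R : Type) [CommRing R] (hR : LeftCoherent R)
    (G : Type) [Group G] [Finite G] :
    LeftCoherent (MonoidAlgebra R G) ∧ RightCoherent (MonoidAlgebra R G) := by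
  haveI := Fintype.ofFinite G
  haveI : Module.Finite R (MonoidAlgebra R G) :=
    Module.Finite.equiv ((Finsupp.linearEquivFunOnFinite R R G).symm.trans (MonoidAlgebra.coeffLinearEquiv R).symm)
  haveI : Module.Free R (MonoidAlgebra R G) :=
    Module.Free.of_equiv (MonoidAlgebra.coeffLinearEquiv R (S := R) (M := G)).symm
  haveI : Module.Finite R (MonoidAlgebra R G)ᵐᵒᵖ :=
    Module.Finite.equiv (MulOpposite.opLinearEquiv R (M := MonoidAlgebra R G))
  haveI : Module.Free R (MonoidAlgebra R G)ᵐᵒᵖ :=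
    Module.Free.of_equiv (MulOpposite.opLinearEquiv R (M := MonoidAlgebra R G))
  exact ⟨mainCoherent R hR _, mainCoherent R hR _⟩
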